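/- Suppose the system Ax ≥ b consists of a single constraint a·x ≥ b with a ∈ ℤ^n and b ∈ ℤ, and X ⊆ ℤ^n is such that inf { c·x : x ∈ X } is finite. Then v^L = v̄* = v*, where v^L = sup_{λ≥0} inf_{x∈X}(c·x + λ(b − a·x)), v* = inf { c·x : a·x ≥ b, x ∈ conv X }, and v̄* = inf { c·x : a·x ≥ b, x ∈ closure(conv X) }. -/

import Mathlib

open Matrix

/-- Linear lower bounds on `X` extend to the closed convex hull. -/
lemma aux_halfspace {n : ℕ} (u : Fin n → ℝ) (t : ℝ) (X : Set (Fin n → ℝ))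
    (h : ∀ x ∈ X, t ≤ u ⬝ᵥ x) :
    ∀ y ∈ closure (convexHull ℝ X), t ≤ u ⬝ᵥ y := by
  have hlin : IsLinearMap ℝ (fun y : Fin n → ℝ => u ⬝ᵥ y) :=
    ⟨fun x y => dotProduct_add u x y, fun r x => by simp [dotProduct_smul, smul_eq_mul]⟩
  have hcont : Continuous fun y : Fin n → ℝ => u ⬝ᵥ y := by
    simp only [dotProduct]
    exact continuous_finset_sum _ fun i _ => (continuous_const.mul (continuous_apply i))
  have hconv : Convex ℝ {y : Fin n → ℝ | t ≤ u ⬝ᵥ y} := convex_halfSpace_ge hlin t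
  have hclosed : IsClosed {y : Fin n → ℝ | t ≤ u ⬝ᵥ y} := isClosed_le continuous_const hcont
  intro y hy
  exact closure_minimal (convexHull_min h hconv) hclosed hy

/-- Affine version used for the Lagrangian. -/
lemma aux_affine {n : ℕ} (a c : Fin n → ℝ) (b lam t : ℝ) (X : Set (Fin n → ℝ))
    (h : ∀ x ∈ X, t ≤ c ⬝ᵥ x + lam * (b - a ⬝ᵥ x)) :
    ∀ y ∈ closure (convexHull ℝ X), t ≤ c ⬝ᵥ y + lam * (b - a ⬝ᵥ y) := by
  have key : ∀ y : Fin n → ℝ, (c - lam • a) ⬝ᵥ y = c ⬝ᵥ y - lam * (a ⬝ᵥ y) := by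
    intro y
    rw [sub_dotProduct, smul_dotProduct]; simp [smul_eq_mul]
  intro y hy
  have := aux_halfspace (c - lam • a) (t - lam * b) X (fun x hx => by
    have := h x hx; rw [key]; linarith) y hy
  rw [key] at this; linarith

/-- Integrality: an integer linear form on an integral point, if `< b`, is `≤ b - 1`. -/
lemma aux_int {n : ℕ} (a : Fin n → ℤ) (b : ℤ) (x : Fin n → ℝ)
    (hx : ∀ i, ∃ z : ℤ, x i = (z : ℝ))
    (h : (fun i => (a i : ℝ)) ⬝ᵥ x < (b : ℝ)) :
    (1 : ℝ) ≤ (b : ℝ) - (fun i => (a i : ℝ)) ⬝ᵥ x := by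
  choose z hz using hx
  have hval : (fun i => (a i : ℝ)) ⬝ᵥ x = ((∑ i, a i * z i : ℤ) : ℝ) := by
    simp only [dotProduct]
    push_cast
    exact Finset.sum_congr rfl fun i _ => by rw [hz i]
  rw [hval] at h ⊢
  have hlt : (∑ i, a i * z i) < b := by exact_mod_cast h
  have : (∑ i, a i * z i) ≤ b - 1 := by omega
  have h2 : ((∑ i, a i * z i : ℤ) : ℝ) ≤ ((b - 1 : ℤ) : ℝ) := by exact_mod_cast this
  push_cast at h2 ⊢
  linarith


lemma aux_mix {n : ℕ} (a : Fin n → ℤ) (b : ℤ) (c : Fin n → ℝ) (X : Set (Fin n → ℝ))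
    (u w : Fin n → ℝ) (hu : u ∈ X) (hw : w ∈ X)
    (hub : (b : ℝ) ≤ (fun i => (a i : ℝ)) ⬝ᵥ u)
    (hsw : (1 : ℝ) ≤ (b : ℝ) - (fun i => (a i : ℝ)) ⬝ᵥ w)
    (lamp lamm A : ℝ) (hle : lamm ≤ lamp)
    (hfu : c ⬝ᵥ u + lamp * ((b : ℝ) - (fun i => (a i : ℝ)) ⬝ᵥ u) < A)
    (hfw : c ⬝ᵥ w + lamm * ((b : ℝ) - (fun i => (a i : ℝ)) ⬝ᵥ w) < A) :
    ∃ z ∈ convexHull ℝ X, (b : ℝ) ≤ (fun i => (a i : ℝ)) ⬝ᵥ z ∧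
      c ⬝ᵥ z < A + ((b : ℝ) - (fun i => (a i : ℝ)) ⬝ᵥ w) * (lamp - lamm) := by
  set av : (Fin n → ℝ) → ℝ := fun x => (fun i => (a i : ℝ)) ⬝ᵥ x with hav
  set su : ℝ := av u - (b : ℝ) with hsu_def
  set sw : ℝ := (b : ℝ) - av w with hsw_def
  have hsu0 : 0 ≤ su := by simp only [hsu_def]; linarith
  have hsum : 0 < sw + su := by linarith
  set t : ℝ := sw / (sw + su) with ht_def
  have ht0 : 0 < t := div_pos (by linarith) hsum
  have ht1 : t ≤ 1 := by
    rw [ht_def, div_le_one hsum]; linarith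
  set z : Fin n → ℝ := t • u + (1 - t) • w with hz_def
  have hzmem : z ∈ convexHull ℝ X :=
    (convex_convexHull ℝ X) (subset_convexHull ℝ X hu) (subset_convexHull ℝ X hw)
      ht0.le (by linarith) (by ring)
  have havz : av z = t * av u + (1 - t) * av w := by
    simp [hav, hz_def, dotProduct_add, dotProduct_smul, smul_eq_mul]
  have hq : t * su = (1 - t) * sw := by
    rw [ht_def]; field_simp; ring
  have havzb : av z = (b : ℝ) := by
    rw [havz]
    have h1 : av u = (b : ℝ) + su := by rw [hsu_def]; ring
    have h2 : av w = (b : ℝ) - sw := by rw [hsw_def]; ring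
    rw [h1, h2]; nlinarith [hq]
  have hfz : c ⬝ᵥ z = t * (c ⬝ᵥ u) + (1 - t) * (c ⬝ᵥ w) := by
    simp [hz_def, dotProduct_add, dotProduct_smul, smul_eq_mul]
  refine ⟨z, hzmem, le_of_eq havzb.symm, ?_⟩
  have hfu' : c ⬝ᵥ u < A + lamp * su := by
    have : lamp * ((b : ℝ) - av u) = -(lamp * su) := by rw [hsu_def]; ring
    rw [this] at hfu; linarith
  have hfw' : c ⬝ᵥ w < A - lamm * sw := by
    have : lamm * ((b : ℝ) - av w) = lamm * sw := by rw [hsw_def]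
    rw [this] at hfw; linarith
  have k1 : t * (c ⬝ᵥ u) < t * (A + lamp * su) := by
    exact mul_lt_mul_of_pos_left hfu' ht0
  have k2 : (1 - t) * (c ⬝ᵥ w) ≤ (1 - t) * (A - lamm * sw) := by
    apply mul_le_mul_of_nonneg_left hfw'.le (by linarith)
  have hqle : t * su ≤ sw := by
    rw [hq]; nlinarith
  have e : t * (A + lamp * su) + (1 - t) * (A - lamm * sw) = A + (t * su) * (lamp - lamm) := by
    linear_combination lamm * hq
  have k3 : (t * su) * (lamp - lamm) ≤ sw * (lamp - lamm) :=
    mul_le_mul_of_nonneg_right hqle (sub_nonneg.mpr hle)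
  rw [hfz]
  linarith [k1, k2, e, k3]

lemma aux_main {n : ℕ} (a : Fin n → ℤ) (b : ℤ) (c : Fin n → ℝ) (X : Set (Fin n → ℝ))
    (hint : ∀ x ∈ X, (fun i => (a i : ℝ)) ⬝ᵥ x < (b : ℝ) →
      (1 : ℝ) ≤ (b : ℝ) - (fun i => (a i : ℝ)) ⬝ᵥ x)
    (r Lr : ℝ) (hm : ∀ x ∈ X, r ≤ c ⬝ᵥ x)
    (hgood : ∀ lam : ℝ, 0 ≤ lam → ∀ ε : ℝ, 0 < ε →
      ∃ x ∈ X, c ⬝ᵥ x + lam * ((b : ℝ) - (fun i => (a i : ℝ)) ⬝ᵥ x) < Lr + ε)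
    (δ : ℝ) (hδ : 0 < δ) :
    ∃ z ∈ convexHull ℝ X, (b : ℝ) ≤ (fun i => (a i : ℝ)) ⬝ᵥ z ∧ c ⬝ᵥ z < Lr + δ := by
  set av : (Fin n → ℝ) → ℝ := fun x => (fun i => (a i : ℝ)) ⬝ᵥ x with hav
  set ε : ℝ := δ / 2 with hε_def
  have hε : 0 < ε := by positivity
  set P : ℝ → Prop :=
    fun lam => ∃ w ∈ X, av w < (b : ℝ) ∧ c ⬝ᵥ w + lam * ((b : ℝ) - av w) < Lr + ε with hP
  by_cases hP0 : P 0
  · -- the interesting case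
    set Λ : Set ℝ := {lam : ℝ | 0 ≤ lam ∧ P lam} with hΛ
    have hne : Λ.Nonempty := ⟨0, le_rfl, hP0⟩
    have hrlt : r < Lr + ε := by
      obtain ⟨w, hw, hwb, hgw⟩ := hP0
      have h2 := hm w hw
      nlinarith
    have hbdd : BddAbove Λ := by
      refine ⟨Lr + ε - r, ?_⟩
      rintro lam ⟨h0, w, hw, hwb, hgw⟩
      have h1 := hint w hw hwb
      have h2 := hm w hw
      nlinarith [mul_le_mul_of_nonneg_left h1 h0]
    set ls : ℝ := sSup Λ with hls
    have h0star : 0 ≤ ls := le_csSup hbdd ⟨le_rfl, hP0⟩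
    have hnotP : ∀ lam : ℝ, ls < lam → ¬ P lam := by
      intro lam hl hPl
      exact absurd (le_csSup hbdd ⟨h0star.trans hl.le, hPl⟩) (not_le.2 hl)
    rcases eq_or_lt_of_le h0star with h | h
    · -- ls = 0 : use lamm = 0 with the witness of P 0
      obtain ⟨w, hw, hwb, hgw⟩ := hP0
      have hsw := hint w hw hwb
      set lamp : ℝ := ε / (2 * ((b : ℝ) - av w)) with hlamp_def
      have hlamp : 0 < lamp := by positivity
      obtain ⟨u, hu, hgu⟩ := hgood lamp hlamp.le ε hε
      have hub : (b : ℝ) ≤ av u := by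
        by_contra hc
        push_neg at hc
        exact hnotP lamp (h ▸ hlamp) ⟨u, hu, hc, hgu⟩
      obtain ⟨z, hz1, hz2, hz3⟩ :=
        aux_mix a b c X u w hu hw hub hsw lamp 0 (Lr + ε) hlamp.le
          hgu (by simpa using hgw)
      refine ⟨z, hz1, hz2, ?_⟩
      have hkey : ((b : ℝ) - av w) * (lamp - 0) = ε / 2 := by
        rw [hlamp_def]
        field_simp [(sub_pos.mpr hwb).ne']
        ring
      rw [hkey] at hz3
      simp only [hε_def] at hz3 ⊢
      linarith
    · -- 0 < ls
      have hd : 0 < Lr + ε - r := by linarith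
      set η : ℝ := min (ls / 2) (ε * ls / (8 * (Lr + ε - r))) with hη_def
      have hη : 0 < η := lt_min (by positivity) (by positivity)
      obtain ⟨lamm, hlammΛ, hlamm_gt⟩ :=
        exists_lt_of_lt_csSup hne (show ls - η < ls by linarith)
      obtain ⟨h0m, w, hw, hwb, hgw⟩ := hlammΛ
      have hlamm_le : lamm ≤ ls := le_csSup hbdd ⟨h0m, w, hw, hwb, hgw⟩
      have hlamm_half : ls / 2 ≤ lamm := by
        have := min_le_left (ls / 2) (ε * ls / (8 * (Lr + ε - r)))
        rw [← hη_def] at this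
        linarith
      have hsw := hint w hw hwb
      have hswB : ls * ((b : ℝ) - av w) < 2 * (Lr + ε - r) := by
        have h2 := hm w hw
        nlinarith [mul_le_mul_of_nonneg_right hlamm_half (by linarith : (0:ℝ) ≤ (b : ℝ) - av w)]
      set lamp : ℝ := ls + η with hlamp_def
      obtain ⟨u, hu, hgu⟩ := hgood lamp (by linarith) ε hε
      have hub : (b : ℝ) ≤ av u := by
        by_contra hc
        push_neg at hc
        exact hnotP lamp (by rw [hlamp_def]; linarith) ⟨u, hu, hc, hgu⟩
      obtain ⟨z, hz1, hz2, hz3⟩ :=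
        aux_mix a b c X u w hu hw hub hsw lamp lamm (Lr + ε) (by linarith)
          hgu hgw
      refine ⟨z, hz1, hz2, ?_⟩
      have hbound : ((b : ℝ) - av w) * (lamp - lamm) < ε := by
        have hA3 : 8 * (Lr + ε - r) * η ≤ ε * ls := by
          have h1 := min_le_right (ls / 2) (ε * ls / (8 * (Lr + ε - r)))
          rw [← hη_def] at h1
          have h2 := mul_le_mul_of_nonneg_left h1 (by positivity : (0:ℝ) ≤ 8 * (Lr + ε - r))
          calc 8 * (Lr + ε - r) * η ≤ 8 * (Lr + ε - r) * (ε * ls / (8 * (Lr + ε - r))) := h2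
            _ = ε * ls := by field_simp
        have hlp : lamp - lamm < 2 * η := by rw [hlamp_def]; linarith
        nlinarith [mul_lt_mul_of_pos_left hlp (show (0:ℝ) < (b : ℝ) - av w by linarith),
          mul_le_mul_of_nonneg_right hA3 (show (0:ℝ) ≤ (b : ℝ) - av w by linarith),
          mul_pos hd hη, mul_pos h hη]
      simp only [hε_def] at hz3 hbound ⊢
      linarith
  · -- ¬ P 0 : the dual witness at lam = 0 is already feasible
    obtain ⟨x, hx, hgx⟩ := hgood 0 le_rfl ε hε
    have hub : (b : ℝ) ≤ av x := by
      by_contra hc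
      push_neg at hc
      exact hP0 ⟨x, hx, hc, hgx⟩
    refine ⟨x, subset_convexHull ℝ X hx, hub, ?_⟩
    have : c ⬝ᵥ x < Lr + ε := by simpa using hgx
    simp only [hε_def] at this
    linarith

theorem geoffrion_single_rational_constraint {n : ℕ}
    (a : Fin n → ℤ) (b : ℤ) (c : Fin n → ℝ) (X : Set (Fin n → ℝ))
    (hX : X ⊆ {x : Fin n → ℝ | ∀ i, ∃ z : ℤ, x i = (z : ℝ)})
    (hL : ∃ r : ℝ, sInf ((fun x => ((c ⬝ᵥ x : ℝ) : EReal)) '' X) = (r : EReal)) :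
    sSup ((fun lam : ℝ =>
        sInf ((fun x =>
          ((c ⬝ᵥ x + lam * ((b : ℝ) - (fun i => (a i : ℝ)) ⬝ᵥ x) : ℝ) : EReal)) '' X)) ''
          {lam : ℝ | 0 ≤ lam}) =
      sInf ((fun x => ((c ⬝ᵥ x : ℝ) : EReal)) ''
        {x ∈ closure (convexHull ℝ X) | (b : ℝ) ≤ (fun i => (a i : ℝ)) ⬝ᵥ x}) ∧
    sInf ((fun x => ((c ⬝ᵥ x : ℝ) : EReal)) ''
        {x ∈ closure (convexHull ℝ X) | (b : ℝ) ≤ (fun i => (a i : ℝ)) ⬝ᵥ x}) =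
      sInf ((fun x => ((c ⬝ᵥ x : ℝ) : EReal)) ''
        {x ∈ convexHull ℝ X | (b : ℝ) ≤ (fun i => (a i : ℝ)) ⬝ᵥ x}) := by
  classical
  obtain ⟨r, hr⟩ := hL
  set D : ℝ → EReal := fun lam : ℝ =>
    sInf ((fun x =>
      ((c ⬝ᵥ x + lam * ((b : ℝ) - (fun i => (a i : ℝ)) ⬝ᵥ x) : ℝ) : EReal)) '' X) with hD
  set L : EReal := sSup (D '' {lam : ℝ | 0 ≤ lam}) with hLdef
  set Vb : EReal := sInf ((fun x => ((c ⬝ᵥ x : ℝ) : EReal)) ''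
      {x ∈ closure (convexHull ℝ X) | (b : ℝ) ≤ (fun i => (a i : ℝ)) ⬝ᵥ x}) with hVbdef
  set V : EReal := sInf ((fun x => ((c ⬝ᵥ x : ℝ) : EReal)) ''
      {x ∈ convexHull ℝ X | (b : ℝ) ≤ (fun i => (a i : ℝ)) ⬝ᵥ x}) with hVdef
  have hXne : X.Nonempty := by
    by_contra hcon
    rw [Set.not_nonempty_iff_eq_empty] at hcon
    rw [hcon, Set.image_empty, sInf_empty] at hr
    exact absurd hr (by simp)
  have hm : ∀ x ∈ X, r ≤ c ⬝ᵥ x := by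
    intro x hx
    have h1 : sInf ((fun x => ((c ⬝ᵥ x : ℝ) : EReal)) '' X) ≤ ((c ⬝ᵥ x : ℝ) : EReal) :=
      sInf_le ⟨x, hx, rfl⟩
    rw [hr] at h1
    exact_mod_cast h1
  have hint : ∀ x ∈ X, (fun i => (a i : ℝ)) ⬝ᵥ x < (b : ℝ) →
      (1 : ℝ) ≤ (b : ℝ) - (fun i => (a i : ℝ)) ⬝ᵥ x :=
    fun x hx h => aux_int a b x (hX hx) h
  have hD0 : D 0 = (r : EReal) := by
    have himg : (fun x => ((c ⬝ᵥ x + (0:ℝ) * ((b : ℝ) - (fun i => (a i : ℝ)) ⬝ᵥ x) : ℝ) : EReal)) '' X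
        = (fun x => ((c ⬝ᵥ x : ℝ) : EReal)) '' X :=
      Set.image_congr (fun x _ => by norm_num)
    simp only [hD]
    rw [himg, hr]
  have hrL : (r : EReal) ≤ L := hD0 ▸ le_sSup ⟨0, by norm_num, rfl⟩
  -- weak duality
  have h2 : L ≤ Vb := by
    rw [hLdef, hVbdef]
    apply sSup_le
    rintro e ⟨lam, hlam, rfl⟩
    apply le_sInf
    rintro e' ⟨y, ⟨hy, hby⟩, rfl⟩
    have hlam' : (0:ℝ) ≤ lam := hlam
    show D lam ≤ ((c ⬝ᵥ y : ℝ) : EReal)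
    simp only [hD]
    apply sInf_le_iff.mpr
    intro u hu
    induction u using EReal.rec with
    | bot => exact bot_le
    | coe t =>
        have hub : ∀ x ∈ X, t ≤ c ⬝ᵥ x + lam * ((b : ℝ) - (fun i => (a i : ℝ)) ⬝ᵥ x) := by
          intro x hx
          have hux := hu ⟨x, hx, rfl⟩
          beta_reduce at hux
          exact_mod_cast hux
        have h3 := aux_affine (fun i => (a i : ℝ)) c (b : ℝ) lam t X hub y hy
        have h4 : lam * ((b : ℝ) - (fun i => (a i : ℝ)) ⬝ᵥ y) ≤ 0 :=
          mul_nonpos_of_nonneg_of_nonpos hlam' (by linarith)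
        have h5 : t ≤ c ⬝ᵥ y := by linarith
        exact_mod_cast h5
    | top =>
        obtain ⟨x₀, hx₀⟩ := hXne
        have hux := hu ⟨x₀, hx₀, rfl⟩
        beta_reduce at hux
        rw [top_le_iff] at hux
        exact absurd hux (EReal.coe_ne_top _)
  have h3 : Vb ≤ V :=
    sInf_le_sInf (Set.image_mono (fun y hy => ⟨subset_closure hy.1, hy.2⟩))
  have h1 : V ≤ L := by
    by_cases hF : {x ∈ convexHull ℝ X | (b : ℝ) ≤ (fun i => (a i : ℝ)) ⬝ᵥ x}.Nonempty
    · obtain ⟨y₀, hy₀⟩ := hF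
      have hVle : V ≤ ((c ⬝ᵥ y₀ : ℝ) : EReal) := sInf_le ⟨y₀, hy₀, rfl⟩
      have hLle : L ≤ ((c ⬝ᵥ y₀ : ℝ) : EReal) := h2.trans (h3.trans hVle)
      have hLtop : L ≠ ⊤ := ne_top_of_le_ne_top (EReal.coe_ne_top _) hLle
      have hLbot : L ≠ ⊥ := by
        intro hb
        rw [hb] at hrL
        exact absurd hrL (by simp)
      have hLr : L = ((L.toReal : ℝ) : EReal) := (EReal.coe_toReal hLtop hLbot).symm
      set Lr : ℝ := L.toReal with hLr_def
      have hgood : ∀ lam : ℝ, 0 ≤ lam → ∀ ε : ℝ, 0 < ε →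
          ∃ x ∈ X, c ⬝ᵥ x + lam * ((b : ℝ) - (fun i => (a i : ℝ)) ⬝ᵥ x) < Lr + ε := by
        intro lam hlam ε hε
        by_contra hcon
        push_neg at hcon
        have hDge : ((Lr + ε : ℝ) : EReal) ≤ D lam := by
          rw [hD]
          apply le_sInf
          rintro e ⟨x, hx, rfl⟩
          beta_reduce
          exact_mod_cast hcon x hx
        have hDle : D lam ≤ L := le_sSup ⟨lam, hlam, rfl⟩
        rw [hLr] at hDle
        have := hDge.trans hDle
        rw [EReal.coe_le_coe_iff] at this
        linarith
      by_contra hVL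
      push_neg at hVL
      rw [hLr] at hVL
      obtain ⟨t, ht1, ht2⟩ := EReal.exists_between_coe_real hVL
      have hδ : 0 < t - Lr := by
        rw [EReal.coe_lt_coe_iff] at ht1
        linarith
      obtain ⟨z, hz1, hz2, hz3⟩ := aux_main a b c X hint r Lr hm hgood (t - Lr) hδ
      have h6 : V ≤ ((c ⬝ᵥ z : ℝ) : EReal) := sInf_le ⟨z, ⟨hz1, hz2⟩, rfl⟩
      have h7 : ((c ⬝ᵥ z : ℝ) : EReal) < (t : EReal) := by
        rw [EReal.coe_lt_coe_iff]
        linarith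
      exact absurd (h6.trans_lt (h7.trans ht2)) (lt_irrefl V)
    · -- no feasible point in the convex hull : L = ⊤
      have hallx : ∀ x ∈ X, (fun i => (a i : ℝ)) ⬝ᵥ x < (b : ℝ) := by
        intro x hx
        by_contra hc
        push_neg at hc
        exact hF ⟨x, subset_convexHull ℝ X hx, hc⟩
      have hLtop : L = ⊤ := by
        rw [hLdef, sSup_eq_top]
        intro w hw
        induction w using EReal.rec with
        | bot =>
            refine ⟨D 0, ⟨0, by norm_num, rfl⟩, ?_⟩
            rw [hD0]
            exact EReal.bot_lt_coe r
        | coe M =>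
            refine ⟨D (max 0 (M + 1 - r)), ⟨max 0 (M + 1 - r), (le_max_left _ _ : (0:ℝ) ≤ max 0 (M + 1 - r)), rfl⟩, ?_⟩
            have hDM : ((M + 1 : ℝ) : EReal) ≤ D (max 0 (M + 1 - r)) := by
              rw [hD]
              apply le_sInf
              rintro e ⟨x, hx, rfl⟩
              beta_reduce
              have hi1 := hint x hx (hallx x hx)
              have hi2 := hm x hx
              have hi3 : M + 1 - r ≤ max 0 (M + 1 - r) := le_max_right _ _
              have hi4 : (0 : ℝ) ≤ max 0 (M + 1 - r) := le_max_left _ _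
              rw [EReal.coe_le_coe_iff]
              nlinarith [mul_le_mul_of_nonneg_left hi1 hi4]
            refine lt_of_lt_of_le ?_ hDM
            rw [EReal.coe_lt_coe_iff]
            linarith
        | top => exact absurd hw (lt_irrefl ⊤)
      rw [hLtop]
      exact le_top
  exact ⟨le_antisymm h2 (h3.trans h1), le_antisymm h3 (h1.trans h2)⟩
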